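/- Let H(u) = (1/2) Σ_{j=1}^{n} [ V(|u_j|²) + ω|u_j|² − |u_{j+1} − u_j|² ] on (ℝ²)^n with periodic indices, ω = 4 sin²(mζ/2) − V'(a²), and a_m = (a e^{jmζJ} e₁)_{j=1}^n. Then for each k, the Hessian satisfies D²H(a_m) T_k z = T_k B_k z where B_k = diag(2a²V''(a²) − α_k, −α_k) + iJ β_k, with α_k = 4 cos(mζ) sin²(kζ/2), β_k = 2 sin(mζ) sin(kζ). -/

import Mathlib

open Matrix Complex

noncomputable section

/-- The 2×2 symplectic matrix `J` (as a complex matrix). -/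
def Jmat : Matrix (Fin 2) (Fin 2) ℂ := !![0, -1; 1, 0]

/-- `e₁ e₁ᵀ = diag(1,0)`. -/
def E11 : Matrix (Fin 2) (Fin 2) ℂ := !![1, 0; 0, 0]

/-- `T_k z` : the vector with `j`-th component `n^{-1/2} e^{j(ikI+mJ)ζ} z`. -/
def Tk (n : ℕ) (m k : ℤ) (ζ : ℝ) (z : Fin 2 → ℂ) : ℤ → (Fin 2 → ℂ) := fun j =>
  ((Real.sqrt n)⁻¹ : ℂ) •
    (NormedSpace.exp (((j : ℂ) * (ζ : ℂ)) •
      (((k : ℂ) * Complex.I) • (1 : Matrix (Fin 2) (Fin 2) ℂ) + (m : ℂ) • Jmat))).mulVec z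


lemma expJ (θ : ℂ) : NormedSpace.exp (θ • Jmat) =
    Complex.cos θ • (1 : Matrix (Fin 2) (Fin 2) ℂ) + Complex.sin θ • Jmat := by
  set P : Matrix (Fin 2) (Fin 2) ℂ := !![1, 1; Complex.I, -Complex.I] with hPdef
  set Q : Matrix (Fin 2) (Fin 2) ℂ := !![1/2, -Complex.I/2; 1/2, Complex.I/2] with hQdef
  set d : Fin 2 → ℂ := ![-Complex.I * θ, Complex.I * θ] with hddef
  have hPQ : P * Q = 1 := by
    ext i j; fin_cases i <;> fin_cases j <;>
      simp [hPdef, hQdef, Matrix.mul_apply, Fin.sum_univ_succ] <;> ring_nf <;>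
      simp [Complex.I_sq] <;> ring
  have hP : IsUnit P := by
    rw [Matrix.isUnit_iff_isUnit_det]
    simp only [hPdef, Matrix.det_fin_two_of, isUnit_iff_ne_zero]
    intro h
    rw [show (1:ℂ) * -Complex.I - 1 * Complex.I = (-2) * Complex.I by ring] at h
    simpa [Complex.I_ne_zero] using mul_eq_zero.mp h
  have hQinv : P⁻¹ = Q := Matrix.inv_eq_right_inv hPQ
  have hDmat : Matrix.diagonal d = !![-Complex.I * θ, 0; 0, Complex.I * θ] := by
    ext i j; fin_cases i <;> fin_cases j <;> simp [hddef, Matrix.diagonal]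
  have hconj : θ • Jmat = P * Matrix.diagonal d * P⁻¹ := by
    rw [hQinv, hDmat]
    ext i j; fin_cases i <;> fin_cases j <;>
      simp [hPdef, hQdef, Jmat, Matrix.mul_apply, Fin.sum_univ_succ] <;>
      ring_nf <;> simp [Complex.I_sq] <;> ring
  rw [hconj, Matrix.exp_conj P _ hP, Matrix.exp_diagonal, hQinv]
  have hexpd : NormedSpace.exp d = ![Complex.exp (-Complex.I * θ), Complex.exp (Complex.I * θ)] := by
    rw [Pi.exp_def]
    funext i; fin_cases i <;> simp [hddef, ← Complex.exp_eq_exp_ℂ]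
  have hD2 : Matrix.diagonal (NormedSpace.exp d) =
      !![Complex.exp (-Complex.I * θ), 0; 0, Complex.exp (Complex.I * θ)] := by
    rw [hexpd]; ext i j; fin_cases i <;> fin_cases j <;> simp [Matrix.diagonal]
  rw [hD2]
  ext i j
  fin_cases i <;> fin_cases j <;>
    simp [hPdef, hQdef, Jmat, Matrix.mul_apply, Fin.sum_univ_succ, Complex.cos, Complex.sin] <;>
    ring_nf <;> simp [Complex.I_sq] <;> ring_nf

lemma exp_scalar (c : ℂ) : NormedSpace.exp (c • (1 : Matrix (Fin 2) (Fin 2) ℂ)) =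
    Complex.exp c • (1 : Matrix (Fin 2) (Fin 2) ℂ) := by
  have h1 : c • (1 : Matrix (Fin 2) (Fin 2) ℂ) = Matrix.diagonal (fun _ => c) := by
    ext i j; by_cases h : i = j <;> simp [Matrix.diagonal, Matrix.one_apply, h]
  have h2 : Complex.exp c • (1 : Matrix (Fin 2) (Fin 2) ℂ) = Matrix.diagonal (fun _ => Complex.exp c) := by
    ext i j; by_cases h : i = j <;> simp [Matrix.diagonal, Matrix.one_apply, h]
  rw [h1, h2, Matrix.exp_diagonal, Pi.exp_def]
  simp [← Complex.exp_eq_exp_ℂ]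

lemma exp_split (j m k : ℤ) (ζ : ℝ) :
    NormedSpace.exp (((j : ℂ) * (ζ : ℂ)) •
      (((k : ℂ) * Complex.I) • (1 : Matrix (Fin 2) (Fin 2) ℂ) + (m : ℂ) • Jmat)) =
    Complex.exp ((j : ℂ) * k * ζ * Complex.I) •
      (Complex.cos ((j : ℂ) * m * ζ) • (1 : Matrix (Fin 2) (Fin 2) ℂ) +
        Complex.sin ((j : ℂ) * m * ζ) • Jmat) := by
  have harg : ((j : ℂ) * (ζ : ℂ)) •
      (((k : ℂ) * Complex.I) • (1 : Matrix (Fin 2) (Fin 2) ℂ) + (m : ℂ) • Jmat)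
      = ((j : ℂ) * k * ζ * Complex.I) • (1 : Matrix (Fin 2) (Fin 2) ℂ)
        + ((j : ℂ) * m * ζ) • Jmat := by
    rw [smul_add, smul_smul, smul_smul]; ring_nf
  have hcomm : Commute (((j : ℂ) * k * ζ * Complex.I) • (1 : Matrix (Fin 2) (Fin 2) ℂ))
      (((j : ℂ) * m * ζ) • Jmat) :=
    ((Commute.one_left _).smul_left _).smul_right _
  rw [harg, Matrix.exp_add_of_commute _ _ hcomm, exp_scalar, expJ, smul_mul_assoc, one_mul]

set_option maxHeartbeats 2000000 in
/-- the Hessian `D²H(a_m)` of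
`H(u) = (1/2)Σ_j [V(|u_j|²) + ω|u_j|² − |u_{j+1}−u_j|²]` at the relative equilibrium
`a_m` is the block-circulant operator
`(D²H(a_m) x)_j = A_j x_j + x_{j+1} + x_{j−1}` with diagonal blocks
`A_j = −2cos(mζ) I + 2a²V''(a²) e^{jmζJ} e₁e₁ᵀ e^{−jmζJ}`, and it satisfies
`D²H(a_m) T_k z = T_k B_k z`, where
`B_k = diag(2a²V''(a²) − α_k, −α_k) + iJ β_k`, `α_k = 4cos(mζ)sin²(kζ/2)`,
`β_k = 2 sin(mζ) sin(kζ)`. -/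
theorem stmt5 (n : ℕ) (hn : 1 ≤ n) (m k : ℤ) (a : ℝ) (ha : 0 < a) (V : ℝ → ℝ)
    (ζ : ℝ) (hζ : ζ = 2 * Real.pi / n)
    (c : ℝ) (hc : c = deriv (deriv V) (a ^ 2))
    (A : ℤ → Matrix (Fin 2) (Fin 2) ℂ)
    (hA : ∀ j : ℤ, A j = ((-2 * Real.cos (m * ζ) : ℝ) : ℂ) • (1 : Matrix (Fin 2) (Fin 2) ℂ)
        + ((2 * a ^ 2 * c : ℝ) : ℂ) •
          (NormedSpace.exp (((j * m * ζ : ℝ) : ℂ) • Jmat) * E11 *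
            NormedSpace.exp ((-(j * m * ζ : ℝ) : ℂ) • Jmat)))
    (D2H : (ℤ → (Fin 2 → ℂ)) → (ℤ → (Fin 2 → ℂ)))
    (hD2H : ∀ x j, D2H x j = (A j).mulVec (x j) + x (j + 1) + x (j - 1))
    (αk βk : ℝ)
    (hα : αk = 4 * Real.cos (m * ζ) * (Real.sin (k * ζ / 2)) ^ 2)
    (hβ : βk = 2 * Real.sin (m * ζ) * Real.sin (k * ζ))
    (Bk : Matrix (Fin 2) (Fin 2) ℂ)
    (hB : Bk = !![((2 * a ^ 2 * c - αk : ℝ) : ℂ), 0; 0, ((-αk : ℝ) : ℂ)]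
        + (βk : ℂ) • (Complex.I • Jmat)) :
    ∀ z : Fin 2 → ℂ, D2H (Tk n m k ζ z) = Tk n m k ζ (Bk.mulVec z) := by
  intro z
  funext j
  rw [hD2H]
  unfold Tk
  rw [exp_split j, exp_split (j+1), exp_split (j-1)]
  set e : ℤ → ℂ := fun i => Complex.exp ((i : ℂ) * k * ζ * Complex.I) with he
  set M : ℤ → Matrix (Fin 2) (Fin 2) ℂ := fun i =>
    Complex.cos ((i : ℂ) * m * ζ) • (1 : Matrix (Fin 2) (Fin 2) ℂ) +
      Complex.sin ((i : ℂ) * m * ζ) • Jmat with hM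
  have key : A j * (e j • M j) + (e (j+1) • M (j+1)) + (e (j-1) • M (j-1))
      = e j • (M j * Bk) := by
    have hep : Complex.exp (((j:ℂ)+1)*k*ζ*Complex.I)
        = Complex.exp ((j:ℂ)*k*ζ*Complex.I) * (Complex.cos ((k:ℂ)*ζ) + Complex.sin ((k:ℂ)*ζ) * Complex.I) := by
      rw [show ((j:ℂ)+1)*k*ζ*Complex.I = (j:ℂ)*k*ζ*Complex.I + ((k:ℂ)*ζ)*Complex.I by ring,
        Complex.exp_add]
      simp only [Complex.exp_mul_I]
      try ring
    have hem : Complex.exp (((j:ℂ)-1)*k*ζ*Complex.I)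
        = Complex.exp ((j:ℂ)*k*ζ*Complex.I) * (Complex.cos ((k:ℂ)*ζ) - Complex.sin ((k:ℂ)*ζ) * Complex.I) := by
      rw [show ((j:ℂ)-1)*k*ζ*Complex.I = (j:ℂ)*k*ζ*Complex.I + (-((k:ℂ)*ζ))*Complex.I by ring,
        Complex.exp_add]
      simp only [Complex.exp_mul_I, Complex.cos_neg, Complex.sin_neg]
      ring
    have hcp : Complex.cos (((j:ℂ)+1) * m * ζ) =
        Complex.cos ((j:ℂ)*m*ζ) * Complex.cos ((m:ℂ)*ζ)
          - Complex.sin ((j:ℂ)*m*ζ) * Complex.sin ((m:ℂ)*ζ) := by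
      rw [show ((j:ℂ)+1)*m*ζ = (j:ℂ)*m*ζ + (m:ℂ)*ζ by ring, Complex.cos_add]
    have hsp : Complex.sin (((j:ℂ)+1) * m * ζ) =
        Complex.sin ((j:ℂ)*m*ζ) * Complex.cos ((m:ℂ)*ζ)
          + Complex.cos ((j:ℂ)*m*ζ) * Complex.sin ((m:ℂ)*ζ) := by
      rw [show ((j:ℂ)+1)*m*ζ = (j:ℂ)*m*ζ + (m:ℂ)*ζ by ring, Complex.sin_add]
    have hcm : Complex.cos (((j:ℂ)-1) * m * ζ) =
        Complex.cos ((j:ℂ)*m*ζ) * Complex.cos ((m:ℂ)*ζ)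
          + Complex.sin ((j:ℂ)*m*ζ) * Complex.sin ((m:ℂ)*ζ) := by
      rw [show ((j:ℂ)-1)*m*ζ = (j:ℂ)*m*ζ - (m:ℂ)*ζ by ring, Complex.cos_sub]
    have hsm : Complex.sin (((j:ℂ)-1) * m * ζ) =
        Complex.sin ((j:ℂ)*m*ζ) * Complex.cos ((m:ℂ)*ζ)
          - Complex.cos ((j:ℂ)*m*ζ) * Complex.sin ((m:ℂ)*ζ) := by
      rw [show ((j:ℂ)-1)*m*ζ = (j:ℂ)*m*ζ - (m:ℂ)*ζ by ring, Complex.sin_sub]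
    have hck : Complex.cos ((k:ℂ)*ζ) = 1 - 2 * Complex.sin ((k:ℂ)*ζ/2)^2 := by
      have h1 : Complex.cos (2*((k:ℂ)*ζ/2)) = 1 - 2 * Complex.sin ((k:ℂ)*ζ/2)^2 := by
        rw [Complex.cos_two_mul']
        linear_combination Complex.sin_sq_add_cos_sq ((k:ℂ)*ζ/2)
      have h2 : (2:ℂ)*((k:ℂ)*ζ/2) = (k:ℂ)*ζ := by ring
      rw [h2] at h1
      exact h1
    have hpy := Complex.sin_sq_add_cos_sq ((j:ℂ)*m*ζ)
    have hI := Complex.I_sq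
    rw [hA j, hB, expJ, expJ, hα, hβ]
    ext i i'
    fin_cases i <;> fin_cases i' <;>
      simp [he, hM, Jmat, E11, Matrix.one_fin_two, Matrix.mul_apply, Fin.sum_univ_succ,
        Complex.cos_neg, Complex.sin_neg] <;>
      push_cast <;>
      simp only [hep, hem, hcp, hsp, hcm, hsm, hck]
    · linear_combination (2*(a:ℂ)^2*(c:ℂ)*Complex.cos ((j:ℂ)*m*ζ)*Complex.exp ((j:ℂ)*k*ζ*Complex.I)) * hpy
    · ring
    · linear_combination (2*(a:ℂ)^2*(c:ℂ)*Complex.sin ((j:ℂ)*m*ζ)*Complex.exp ((j:ℂ)*k*ζ*Complex.I)) * hpy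
    · ring
  calc (A j).mulVec (((Real.sqrt n)⁻¹ : ℂ) • (e j • M j).mulVec z)
        + ((Real.sqrt n)⁻¹ : ℂ) • (e (j+1) • M (j+1)).mulVec z
        + ((Real.sqrt n)⁻¹ : ℂ) • (e (j-1) • M (j-1)).mulVec z
      = ((Real.sqrt n)⁻¹ : ℂ) • (A j * (e j • M j) + (e (j+1) • M (j+1))
          + (e (j-1) • M (j-1))).mulVec z := by
        rw [Matrix.mulVec_smul, Matrix.mulVec_mulVec]
        simp [Matrix.add_mulVec, smul_add]
        constructor <;> ring
    _ = ((Real.sqrt n)⁻¹ : ℂ) • (e j • (M j * Bk)).mulVec z := by rw [key]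
    _ = ((Real.sqrt n)⁻¹ : ℂ) • (e j • M j).mulVec (Bk.mulVec z) := by
        rw [Matrix.smul_mulVec, Matrix.smul_mulVec, Matrix.mulVec_mulVec]

end
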